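/- Let m > 1, n > 1 be integers. Then the number of equivalence classes of vectors u ∈ (Z/m)^n with gcd(u_1,...,u_n,m)=1 under the relation u ∼ v iff v = λu for some unit λ ∈ (Z/m)^*, equals m^{n-1} · ∏_{p | m} (1 + 1/p + ... + 1/p^{n-1}), where the product is over prime divisors p of m. -/

import Mathlib

open scoped Classical

def Primitive {m n : ℕ} (u : Fin n → ZMod m) : Prop :=
  Nat.gcd (Finset.univ.gcd fun i => (u i).val) m = 1

def assoc {m n : ℕ} (u v : Fin n → ZMod m) : Prop :=
  ∃ lam : (ZMod m)ˣ, v = fun i => (lam : ZMod m) * u i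

def projSetoid (m n : ℕ) : Setoid {u : Fin n → ZMod m // Primitive u} where
  r u v := assoc u.1 v.1
  iseqv := by
    refine ⟨fun u => ⟨1, by simp⟩, ?_, ?_⟩
    · rintro u v ⟨l, h⟩
      refine ⟨l⁻¹, ?_⟩
      funext i
      simp [h, ← mul_assoc]
    · rintro u v w ⟨l, hl⟩ ⟨k, hk⟩
      refine ⟨k * l, ?_⟩
      funext i
      simp [hk, hl, mul_assoc]

abbrev ProjPt (m n : ℕ) := Quotient (projSetoid m n)

noncomputable def theta (n m : ℕ) : ℕ := Nat.card (ProjPt m n)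

def orthoPt (m n : ℕ) (U W : ProjPt m n) : Prop :=
  ∀ (u w : {x : Fin n → ZMod m // Primitive x}),
    Quotient.mk (projSetoid m n) u = U → Quotient.mk (projSetoid m n) w = W →
      ∑ i, u.1 i * w.1 i = 0

noncomputable def Bmat (m n : ℕ) : Matrix (ProjPt m n) (ProjPt m n) ℚ :=
  fun U V => (Nat.card {W : ProjPt m n // orthoPt m n U W ∧ orthoPt m n V W} : ℚ)

noncomputable def nuVal (p e : ℕ) (x : ZMod (p^e)) : ℕ := if x = 0 then e else padicValNat p x.val

noncomputable def nuXi (p e : ℕ) {n : ℕ} (u v : Fin n → ZMod (p^e)) : ℕ :=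
  sInf {k | ∃ i j : Fin n, k = nuVal p e (u i * v j - u j * v i)}

noncomputable def red (p e : ℕ) {n : ℕ} (u : Fin n → ZMod (p^e)) : Fin n → ZMod (p^(e-1)) :=
  fun i => ZMod.castHom (pow_dvd_pow p (Nat.sub_le e 1)) (ZMod (p^(e-1))) (u i)

noncomputable def eigMult {ι : Type*} [Fintype ι] (B : Matrix ι ι ℚ) (lam : ℚ) : ℕ :=
  Module.finrank ℚ (LinearMap.ker (B.mulVecLin - lam • (LinearMap.id : (ι → ℚ) →ₗ[ℚ] (ι → ℚ))))


lemma mul_natGcd_zero {m : ℕ} (x : ZMod m) (a b : ℕ) (ha : x * a = 0) (hb : x * b = 0) :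
    x * (Nat.gcd a b : ZMod m) = 0 := by
  have h : ((Nat.gcd a b : ℤ) : ZMod m) = ((a : ℤ) * Nat.gcdA a b + (b : ℤ) * Nat.gcdB a b : ℤ) := by
    rw [← Nat.gcd_eq_gcd_ab]
  have h2 : ((Nat.gcd a b : ℕ) : ZMod m)
      = (a : ZMod m) * ((Nat.gcdA a b : ℤ) : ZMod m) + (b : ZMod m) * ((Nat.gcdB a b : ℤ) : ZMod m) := by
    push_cast at h ⊢
    exact h
  rw [h2, mul_add, ← mul_assoc, ← mul_assoc, ha, hb, zero_mul, zero_mul, add_zero]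

lemma mul_finsetGcd_zero {m : ℕ} {ι : Type*} (s : Finset ι) (f : ι → ℕ) (x : ZMod m)
    (h : ∀ i ∈ s, x * (f i : ZMod m) = 0) : x * ((s.gcd f : ℕ) : ZMod m) = 0 := by
  classical
  induction s using Finset.induction with
  | empty => simp
  | insert a s hni ih =>
    rw [Finset.gcd_insert]
    have : (gcd (f a) (s.gcd f) : ℕ) = Nat.gcd (f a) (s.gcd f) := rfl
    rw [this]
    exact mul_natGcd_zero x _ _ (h a (Finset.mem_insert_self a s))
      (ih fun i hi => h i (Finset.mem_insert_of_mem hi))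

lemma free_action {m n : ℕ} [NeZero m] {u : Fin n → ZMod m} (hu : Primitive u)
    (lam : (ZMod m)ˣ) (h : ∀ i, (lam : ZMod m) * u i = u i) : lam = 1 := by
  set x : ZMod m := (lam : ZMod m) - 1 with hx
  have hxu : ∀ i ∈ Finset.univ, x * (((u i).val : ℕ) : ZMod m) = 0 := by
    intro i _
    rw [ZMod.natCast_zmod_val, hx, sub_mul, h i, one_mul, sub_self]
  have hG := mul_finsetGcd_zero Finset.univ (fun i => (u i).val) x hxu
  have hm : x * ((m : ℕ) : ZMod m) = 0 := by rw [ZMod.natCast_self, mul_zero]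
  have := mul_natGcd_zero x _ _ hG hm
  rw [hu] at this
  simp only [Nat.cast_one, mul_one] at this
  have hl : (lam : ZMod m) = 1 := by
    have := sub_eq_zero.mp this
    simpa [hx] using this
  exact Units.ext hl

lemma primitive_iff {m n : ℕ} (hm : m ≠ 0) (u : Fin n → ZMod m) :
    Primitive u ↔ ∀ p : ℕ, p.Prime → p ∣ m → ∃ i, ¬ p ∣ (u i).val := by
  unfold Primitive
  constructor
  · intro h p hp hpm
    by_contra hc
    push_neg at hc
    have h1 : p ∣ Finset.univ.gcd fun i => (u i).val := Finset.dvd_gcd fun i _ => hc i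
    have : p ∣ 1 := h ▸ Nat.dvd_gcd h1 hpm
    exact hp.one_lt.ne' (Nat.dvd_one.mp this)
  · intro h
    by_contra hc
    set g := Nat.gcd (Finset.univ.gcd fun i => (u i).val) m with hg
    have hg0 : g ≠ 0 := fun h0 => hm (Nat.eq_zero_of_gcd_eq_zero_right h0)
    have hp : g.minFac.Prime := Nat.minFac_prime hc
    obtain ⟨i, hi⟩ := h g.minFac hp ((g.minFac_dvd).trans (Nat.gcd_dvd_right _ _))
    exact hi (dvd_trans (dvd_trans g.minFac_dvd (Nat.gcd_dvd_left _ _))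
      (Finset.gcd_dvd (Finset.mem_univ i)))

lemma primitive_smul {m n : ℕ} (hm : m ≠ 0) {u : Fin n → ZMod m} (hu : Primitive u)
    (lam : (ZMod m)ˣ) : Primitive (fun i => (lam : ZMod m) * u i) := by
  rw [primitive_iff hm] at hu ⊢
  intro p hp hpm
  haveI : Fact p.Prime := ⟨hp⟩
  haveI : NeZero m := ⟨hm⟩
  obtain ⟨i, hi⟩ := hu p hp hpm
  refine ⟨i, fun hdvd => hi ?_⟩
  have hcast : ∀ x : ZMod m, ((x.val : ℕ) : ZMod p) = ZMod.castHom hpm (ZMod p) x := by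
    intro x
    rw [ZMod.castHom_apply, ← ZMod.natCast_val]
  have h0 : (((((lam : ZMod m) * u i).val : ℕ)) : ZMod p) = 0 := by
    rwa [ZMod.natCast_eq_zero_iff]
  rw [hcast, map_mul] at h0
  have hunit : IsUnit (ZMod.castHom hpm (ZMod p) (lam : ZMod m)) :=
    (Units.map (ZMod.castHom hpm (ZMod p)).toMonoidHom lam).isUnit
  have h1 : ZMod.castHom hpm (ZMod p) (u i) = 0 := by
    rcases hunit with ⟨w, hw⟩
    have := h0
    rw [← hw] at this
    exact (Units.mul_right_eq_zero w).mp this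
  rw [← hcast] at h1
  rwa [ZMod.natCast_eq_zero_iff] at h1

open Finset ArithmeticFunction in
lemma _dummy : True := trivial

section CountLemmas
open Finset ArithmeticFunction ArithmeticFunction.Moebius ArithmeticFunction.zeta

-- card of {x : ZMod m | d ∣ x.val} = m / d
lemma card_dvd_val (m d : ℕ) (hm : m ≠ 0) (hd : d ∣ m) (hd0 : d ≠ 0) :
    Nat.card {x : ZMod m // d ∣ x.val} = m / d := by
  haveI : NeZero m := ⟨hm⟩
  have e : {x : ZMod m // d ∣ x.val} ≃ Fin (m / d) := by
    refine ⟨fun x => ⟨x.1.val / d, ?_⟩, fun k => ⟨((d * k : ℕ) : ZMod m), ?_⟩, ?_, ?_⟩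
    · exact Nat.div_lt_div_of_lt_of_dvd hd (ZMod.val_lt x.1)
    · rw [ZMod.val_natCast]
      exact (Nat.dvd_mod_iff hd).mpr ⟨k, rfl⟩
    · rintro ⟨x, hx⟩
      apply Subtype.ext
      simp only
      rw [Nat.mul_div_cancel' hx, ZMod.natCast_zmod_val]
    · rintro ⟨k, hk⟩
      apply Fin.ext
      simp only
      have hlt : d * k < m := by
        calc d * k < d * (m / d) :=
              Nat.mul_lt_mul_of_le_of_lt (le_refl d) hk (Nat.pos_of_ne_zero hd0)
        _ = m := Nat.mul_div_cancel' hd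
      rw [ZMod.val_natCast, Nat.mod_eq_of_lt hlt, Nat.mul_div_cancel_left _ (Nat.pos_of_ne_zero hd0)]
  rw [Nat.card_congr e, Nat.card_eq_fintype_card, Fintype.card_fin]

lemma card_all_dvd (m n d : ℕ) (hm : m ≠ 0) (hd : d ∣ m) (hd0 : d ≠ 0) :
    Nat.card {u : Fin n → ZMod m // ∀ i, d ∣ (u i).val} = (m / d) ^ n := by
  have e := Equiv.subtypePiEquivPi (p := fun (_ : Fin n) (x : ZMod m) => d ∣ x.val)
  rw [Nat.card_congr e, Nat.card_pi]
  simp [card_dvd_val m d hm hd hd0]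

open ArithmeticFunction ArithmeticFunction.Moebius ArithmeticFunction.zeta in
lemma card_primitive_moebius (m n : ℕ) (hm : m ≠ 0) :
    (Nat.card {u : Fin n → ZMod m // Primitive u} : ℤ) =
      ∑ d ∈ m.divisors, (μ d : ℤ) * ((m / d : ℕ) : ℤ) ^ n := by
  haveI : NeZero m := ⟨hm⟩
  set g : (Fin n → ZMod m) → ℕ := fun u => Nat.gcd (Finset.univ.gcd fun i => (u i).val) m with hg
  have hgdvd : ∀ u, g u ∣ m := fun u => Nat.gcd_dvd_right _ _
  have hg0 : ∀ u, g u ≠ 0 := fun u h0 => hm (Nat.eq_zero_of_gcd_eq_zero_right h0)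
  have step1 : (Nat.card {u : Fin n → ZMod m // Primitive u} : ℤ)
      = ∑ u : Fin n → ZMod m, if g u = 1 then (1 : ℤ) else 0 := by
    rw [Nat.card_eq_fintype_card, Fintype.card_subtype, Finset.sum_boole]
    norm_cast
    exact congrArg Finset.card (Finset.filter_congr (fun x _ => Iff.rfl))
  have step2 : ∀ u : Fin n → ZMod m, (if g u = 1 then (1 : ℤ) else 0)
      = ∑ d ∈ (g u).divisors, (μ d : ℤ) := by
    intro u
    have h1 : (μ * ↑ζ : ArithmeticFunction ℤ) (g u) = ∑ d ∈ (g u).divisors, (μ d : ℤ) := by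
      rw [coe_mul_zeta_apply]
    rw [moebius_mul_coe_zeta, one_apply] at h1
    exact h1
  have step3 : ∀ u : Fin n → ZMod m, (g u).divisors = m.divisors.filter (· ∣ g u) := by
    intro u
    ext d
    simp only [Nat.mem_divisors, Finset.mem_filter]
    exact ⟨fun ⟨h1, _⟩ => ⟨⟨h1.trans (hgdvd u), hm⟩, h1⟩, fun ⟨_, h2⟩ => ⟨h2, hg0 u⟩⟩
  have step4 : ∀ d ∈ m.divisors, (Finset.filter (fun u : Fin n → ZMod m => d ∣ g u) univ).card
      = (m / d) ^ n := by
    intro d hd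
    rw [Nat.mem_divisors] at hd
    have hpred : ∀ u : Fin n → ZMod m, d ∣ g u ↔ ∀ i, d ∣ (u i).val := by
      intro u
      rw [hg]
      simp only
      rw [Nat.dvd_gcd_iff, and_iff_left hd.1, Finset.dvd_gcd_iff]
      simp
    have := card_all_dvd m n d hm hd.1 (fun h0 => hm (by rw [h0] at hd; exact Nat.eq_zero_of_zero_dvd hd.1))
    rw [← this, Nat.card_eq_fintype_card, Fintype.card_subtype]
    exact congrArg Finset.card (Finset.filter_congr (fun u _ => by simp [hpred u]))
  calc (Nat.card {u : Fin n → ZMod m // Primitive u} : ℤ)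
      = ∑ u : Fin n → ZMod m, if g u = 1 then (1 : ℤ) else 0 := step1
    _ = ∑ u : Fin n → ZMod m, ∑ d ∈ m.divisors, (if d ∣ g u then (μ d : ℤ) else 0) := by
        refine Finset.sum_congr rfl fun u _ => ?_
        rw [step2 u, step3 u, Finset.sum_filter]
    _ = ∑ d ∈ m.divisors, ∑ u : Fin n → ZMod m, (if d ∣ g u then (μ d : ℤ) else 0) :=
        Finset.sum_comm
    _ = ∑ d ∈ m.divisors, (μ d : ℤ) * ((m / d : ℕ) : ℤ) ^ n := by
        refine Finset.sum_congr rfl fun d hd => ?_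
        rw [← Finset.sum_filter, Finset.sum_const, nsmul_eq_mul, step4 d hd, mul_comm]
        push_cast
        ring


lemma squarefree_prod_primes {s : Finset ℕ} (hs : ∀ p ∈ s, p.Prime) :
    Squarefree (∏ p ∈ s, p) := by
  classical
  induction s using Finset.induction with
  | empty => simpa using squarefree_one
  | insert a s hni ih =>
    rw [Finset.prod_insert hni, Nat.squarefree_mul_iff]
    have ha := hs a (Finset.mem_insert_self a s)
    refine ⟨?_, ha.squarefree, ih fun p hp => hs p (Finset.mem_insert_of_mem hp)⟩
    rw [Nat.Prime.coprime_iff_not_dvd ha]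
    intro hdvd
    obtain ⟨q, hq, haq⟩ := (Nat.Prime.prime ha).dvd_finset_prod_iff _ |>.mp hdvd
    have : a = q := ((Nat.prime_dvd_prime_iff_eq ha (hs q (Finset.mem_insert_of_mem hq))).mp haq)
    exact hni (this ▸ hq)

noncomputable def invPow (n : ℕ) : ArithmeticFunction ℚ :=
  ⟨fun d => if d = 0 then 0 else ((d : ℚ) ^ n)⁻¹, if_pos rfl⟩

lemma invPow_apply (n d : ℕ) (hd : d ≠ 0) : invPow n d = ((d : ℚ) ^ n)⁻¹ := if_neg hd

lemma invPow_mult (n : ℕ) : (invPow n).IsMultiplicative := by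
  constructor
  · rw [invPow_apply n 1 one_ne_zero]; simp
  · intro a b hab
    rcases eq_or_ne a 0 with rfl | ha
    · simp [invPow, (Nat.coprime_zero_left _).mp hab]
    rcases eq_or_ne b 0 with rfl | hb
    · simp [invPow, (Nat.coprime_zero_right _).mp hab]
    rw [invPow_apply n _ (mul_ne_zero ha hb), invPow_apply n a ha, invPow_apply n b hb]
    push_cast
    rw [mul_pow, mul_inv]

lemma sum_moebius_prod (m n : ℕ) (hm : m ≠ 0) :
    (∑ d ∈ m.divisors, (μ d : ℚ) * ((m / d : ℕ) : ℚ) ^ n)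
      = (m : ℚ) ^ n * ∏ p ∈ m.primeFactors, (1 - ((p : ℚ) ^ n)⁻¹) := by
  set r := ∏ p ∈ m.primeFactors, p with hr
  have hrsq : Squarefree r := squarefree_prod_primes fun p hp => Nat.prime_of_mem_primeFactors hp
  have hrdvd : r ∣ m := Nat.prod_primeFactors_dvd m
  have hrpf : r.primeFactors = m.primeFactors :=
    Nat.primeFactors_prod fun p hp => Nat.prime_of_mem_primeFactors hp
  have step1 : (∑ d ∈ m.divisors, (μ d : ℚ) * ((m / d : ℕ) : ℚ) ^ n)
      = (m : ℚ) ^ n * ∑ d ∈ m.divisors, (μ d : ℚ) * invPow n d := by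
    rw [Finset.mul_sum]
    refine Finset.sum_congr rfl fun d hd => ?_
    rw [Nat.mem_divisors] at hd
    have hd0 : d ≠ 0 := fun h0 => hm (by rw [h0] at hd; exact Nat.eq_zero_of_zero_dvd hd.1)
    have hdQ : (d : ℚ) ≠ 0 := Nat.cast_ne_zero.mpr hd0
    rw [Nat.cast_div hd.1 hdQ, div_pow, invPow_apply n d hd0]
    field_simp
  have step2 : (∑ d ∈ m.divisors, (μ d : ℚ) * invPow n d)
      = ∑ d ∈ r.divisors, (μ d : ℚ) * invPow n d := by
    refine (Finset.sum_subset (Nat.divisors_subset_of_dvd hm hrdvd) fun d hd hnd => ?_).symm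
    have : ¬ Squarefree d := by
      intro hsq
      apply hnd
      rw [Nat.mem_divisors] at hd ⊢
      refine ⟨?_, hrsq.ne_zero⟩
      calc d = ∏ p ∈ d.primeFactors, p := (Nat.prod_primeFactors_of_squarefree hsq).symm
        _ ∣ r := Finset.prod_dvd_prod_of_subset _ _ _
            (Nat.primeFactors_mono hd.1 hm)
    rw [moebius_eq_zero_of_not_squarefree this]
    simp
  rw [step1, step2,
    ← ArithmeticFunction.IsMultiplicative.prodPrimeFactors_one_sub_of_squarefree (invPow n) (invPow_mult n) hrsq, hrpf]
  congr 1
  refine Finset.prod_congr rfl fun p hp => ?_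
  rw [invPow_apply n p (Nat.prime_of_mem_primeFactors hp).ne_zero]

end CountLemmas

lemma card_primitive_eq (m n : ℕ) (hm : m ≠ 0) :
    Nat.card {u : Fin n → ZMod m // Primitive u} = theta n m * m.totient := by
  haveI : NeZero m := ⟨hm⟩
  have hbij : Function.Bijective (fun cg : ProjPt m n × (ZMod m)ˣ =>
      (⟨fun i => (cg.2 : ZMod m) * (cg.1.out.1 i), primitive_smul hm cg.1.out.2 cg.2⟩ :
        {u : Fin n → ZMod m // Primitive u})) := by
    constructor
    · rintro ⟨c, g⟩ ⟨c', g'⟩ h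
      simp only [Subtype.mk.injEq] at h
      have hr : assoc c.out.1 c'.out.1 := by
        refine ⟨g'⁻¹ * g, ?_⟩
        funext i
        have := congrFun h i
        push_cast [Units.val_mul]
        rw [mul_assoc, this, ← mul_assoc]
        simp
      have hcc : c = c' := by
        rw [← Quotient.out_eq c, ← Quotient.out_eq c']
        exact Quotient.sound hr
      subst hcc
      have hg : g'⁻¹ * g = 1 := by
        apply free_action c.out.2
        intro i
        have := congrFun h i
        push_cast [Units.val_mul]
        rw [mul_assoc, this, ← mul_assoc]
        simp
      have : g = g' := by
        have := congrArg (fun z => g' * z) hg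
        simpa [← mul_assoc, eq_comm] using this.symm
      simp [this]
    · intro x
      obtain ⟨lam, hlam⟩ := Quotient.exact (Quotient.out_eq (Quotient.mk (projSetoid m n) x))
      exact ⟨(Quotient.mk (projSetoid m n) x, lam), Subtype.ext hlam.symm⟩
  have := Nat.card_eq_of_bijective _ hbij
  rw [← this, Nat.card_prod]
  congr 1
  rw [Nat.card_eq_fintype_card, ZMod.card_units_eq_totient]


open ArithmeticFunction ArithmeticFunction.Moebius ArithmeticFunction.zeta in
theorem stmt4 (m n : ℕ) (hm : 1 < m) (hn : 1 < n) :
    (theta n m : ℚ) = (m : ℚ)^(n-1) *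
      ∏ p ∈ m.primeFactors, ∑ k ∈ Finset.range n, (1 : ℚ) / (p : ℚ)^k := by
  have hm0 : m ≠ 0 := by omega
  have hmQ : (m : ℚ) ≠ 0 := Nat.cast_ne_zero.mpr hm0
  have hQ : (Nat.card {u : Fin n → ZMod m // Primitive u} : ℚ)
      = ∑ d ∈ m.divisors, ((μ d : ℤ) : ℚ) * ((m / d : ℕ) : ℚ) ^ n := by
    calc ((Nat.card {u : Fin n → ZMod m // Primitive u} : ℚ))
        = (((Nat.card {u : Fin n → ZMod m // Primitive u} : ℤ)) : ℚ) := by norm_cast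
      _ = ((∑ d ∈ m.divisors, (μ d : ℤ) * ((m / d : ℕ) : ℤ) ^ n : ℤ) : ℚ) := by
          rw [card_primitive_moebius m n hm0]
      _ = ∑ d ∈ m.divisors, ((μ d : ℤ) : ℚ) * ((m / d : ℕ) : ℚ) ^ n := by
          rw [Int.cast_sum]
          refine Finset.sum_congr rfl fun d _ => ?_
          rw [Int.cast_mul, Int.cast_pow, Int.cast_natCast]
  rw [card_primitive_eq m n hm0] at hQ
  rw [sum_moebius_prod m n hm0] at hQ
  have hfac : ∀ p ∈ m.primeFactors, (1 : ℚ) - ((p : ℚ) ^ n)⁻¹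
      = (1 - (p : ℚ)⁻¹) * ∑ k ∈ Finset.range n, (1 : ℚ) / (p : ℚ) ^ k := by
    intro p hp
    have hp2 := Nat.prime_of_mem_primeFactors hp
    have hgeo := geom_sum_mul ((p : ℚ)⁻¹) n
    simp_rw [one_div, ← inv_pow]
    linear_combination hgeo
  rw [Finset.prod_congr rfl hfac, Finset.prod_mul_distrib] at hQ
  have htot : (m.totient : ℚ) = m * ∏ p ∈ m.primeFactors, (1 - (p : ℚ)⁻¹) :=
    Nat.totient_eq_mul_prod_factors m
  have hC : (∏ p ∈ m.primeFactors, (1 - (p : ℚ)⁻¹)) ≠ 0 := by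
    rw [Finset.prod_ne_zero_iff]
    intro p hp
    have h1 : (1 : ℚ) < p := by exact_mod_cast (Nat.prime_of_mem_primeFactors hp).one_lt
    rw [sub_ne_zero]
    intro h
    rw [eq_comm, inv_eq_one] at h
    rw [h] at h1
    exact lt_irrefl _ h1
  push_cast at hQ
  rw [htot] at hQ
  set P := ∏ p ∈ m.primeFactors, ∑ k ∈ Finset.range n, (1 : ℚ) / (p : ℚ) ^ k with hP
  have h2 : (theta n m : ℚ) * m = (m : ℚ) ^ n * P := by
    apply mul_right_cancel₀ hC
    linear_combination hQ
  have hpow : (m : ℚ) ^ n = (m : ℚ) ^ (n - 1) * m := by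
    conv_lhs => rw [show n = (n - 1) + 1 by omega]
    rw [pow_succ]
  apply mul_right_cancel₀ hmQ
  rw [h2, hpow]
  ring
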